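/- arXiv:1705.00663 — 4 statements merged into one kernel-verified Lean document; each statement's English description precedes it below -/
import Mathlib

section
/- Let U and P be finite-dimensional real inner product spaces, let H : U × P → U and J : U × P → ℝ be Fréchet differentiable, and let u : P → U be a differentiable map with u(ρ) = H(u(ρ), ρ) for all ρ ∈ P. Fix ρ₀ ∈ P and suppose ū ∈ U satisfies the adjoint equation ū = ∇_u J(u(ρ₀), ρ₀) + (∂_u H(u(ρ₀), ρ₀))* ū. Then the gradient at ρ₀ of the reduced objective ρ ↦ J(u(ρ), ρ) equals ∇_ρ J(u(ρ₀), ρ₀) + (∂_ρ H(u(ρ₀), ρ₀))* ū. -/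
open InnerProductSpace ContinuousLinearMap

/-- Adjoint-based gradient formula: if `u` is a differentiable feasible solution map of
`u(ρ) = H(u(ρ), ρ)` and `ū` solves the adjoint equation
`ū = ∇_u J + (∂_u H)* ū` at `(u(ρ₀), ρ₀)`, then the gradient of the reduced objective
`ρ ↦ J(u(ρ), ρ)` at `ρ₀` equals `∇_ρ J + (∂_ρ H)* ū`. -/
theorem reduced_gradient_via_adjoint
    {U P : Type*}
    [NormedAddCommGroup U] [InnerProductSpace ℝ U] [FiniteDimensional ℝ U]
    [NormedAddCommGroup P] [InnerProductSpace ℝ P] [FiniteDimensional ℝ P]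
    (H : U × P → U) (J : U × P → ℝ) (u : P → U)
    (hH : Differentiable ℝ H) (hJ : Differentiable ℝ J)
    (hu : Differentiable ℝ u)
    (hfix : ∀ ρ : P, u ρ = H (u ρ, ρ))
    (ρ₀ : P) (ubar : U)
    (hadj : ubar = gradient (fun v => J (v, ρ₀)) (u ρ₀)
        + (ContinuousLinearMap.adjoint (fderiv ℝ (fun v => H (v, ρ₀)) (u ρ₀))) ubar) :
    gradient (fun ρ => J (u ρ, ρ)) ρ₀
      = gradient (fun p => J (u ρ₀, p)) ρ₀
        + (ContinuousLinearMap.adjoint (fderiv ℝ (fun p => H (u ρ₀, p)) ρ₀)) ubar := by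
  set x₀ := u ρ₀ with hx₀
  set DH := fderiv ℝ H (x₀, ρ₀) with hDH
  set DJ := fderiv ℝ J (x₀, ρ₀) with hDJ
  set u' := fderiv ℝ u ρ₀ with hu'def
  have hinl : ∀ (q : P) (x : U), HasFDerivAt (fun v : U => (v, q))
      (ContinuousLinearMap.inl ℝ U P) x :=
    fun q x => (hasFDerivAt_id x).prodMk (hasFDerivAt_const q x)
  have hinr : ∀ (v : U) (p : P), HasFDerivAt (fun q : P => (v, q))
      (ContinuousLinearMap.inr ℝ U P) p :=
    fun v p => (hasFDerivAt_const v p).prodMk (hasFDerivAt_id p)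
  have hHu : fderiv ℝ (fun v => H (v, ρ₀)) x₀ = DH.comp (ContinuousLinearMap.inl ℝ U P) :=
    ((hH (x₀, ρ₀)).hasFDerivAt.comp x₀ (hinl ρ₀ x₀)).fderiv
  have hHρ : fderiv ℝ (fun p => H (x₀, p)) ρ₀ = DH.comp (ContinuousLinearMap.inr ℝ U P) :=
    ((hH (x₀, ρ₀)).hasFDerivAt.comp ρ₀ (hinr x₀ ρ₀)).fderiv
  have hJu : fderiv ℝ (fun v => J (v, ρ₀)) x₀ = DJ.comp (ContinuousLinearMap.inl ℝ U P) :=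
    ((hJ (x₀, ρ₀)).hasFDerivAt.comp x₀ (hinl ρ₀ x₀)).fderiv
  have hJρ : fderiv ℝ (fun p => J (x₀, p)) ρ₀ = DJ.comp (ContinuousLinearMap.inr ℝ U P) :=
    ((hJ (x₀, ρ₀)).hasFDerivAt.comp ρ₀ (hinr x₀ ρ₀)).fderiv
  have hup : HasFDerivAt (fun ρ => (u ρ, ρ)) (u'.prod (ContinuousLinearMap.id ℝ P)) ρ₀ :=
    (hu ρ₀).hasFDerivAt.prodMk (hasFDerivAt_id ρ₀)
  have hcomp0 := HasFDerivAt.comp (f := fun ρ => (u ρ, ρ)) ρ₀ (hH (u ρ₀, ρ₀)).hasFDerivAt hup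
  have hcomp : HasFDerivAt (fun ρ => H (u ρ, ρ))
      (DH.comp (u'.prod (ContinuousLinearMap.id ℝ P))) ρ₀ := hcomp0
  have hfixfun : (fun ρ => H (u ρ, ρ)) = u := funext fun ρ => (hfix ρ).symm
  rw [hfixfun] at hcomp
  have hfix' : u' = DH.comp (u'.prod (ContinuousLinearMap.id ℝ P)) :=
    (hu ρ₀).hasFDerivAt.unique hcomp
  have hJcomp0 := HasFDerivAt.comp (f := fun ρ => (u ρ, ρ)) ρ₀ (hJ (u ρ₀, ρ₀)).hasFDerivAt hup
  have hJcomp : HasFDerivAt (fun ρ => J (u ρ, ρ))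
      (DJ.comp (u'.prod (ContinuousLinearMap.id ℝ P))) ρ₀ := hJcomp0
  -- inner-product characterization of gradients
  have hgradu : ∀ w : U, inner ℝ (gradient (fun v => J (v, ρ₀)) x₀) w = DJ (w, 0) := by
    intro w
    rw [gradient, InnerProductSpace.toDual_symm_apply, hJu]
    simp
  have hgradρ : ∀ h : P, inner ℝ (gradient (fun p => J (x₀, p)) ρ₀) h = DJ (0, h) := by
    intro h
    rw [gradient, InnerProductSpace.toDual_symm_apply, hJρ]
    simp
  apply ext_inner_right ℝ
  intro h
  -- LHS
  have hLHS : (inner ℝ (gradient (fun ρ => J (u ρ, ρ)) ρ₀) h : ℝ)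
      = DJ (u' h, 0) + DJ (0, h) := by
    rw [gradient, InnerProductSpace.toDual_symm_apply, hJcomp.fderiv]
    have : ((u' h : U), h) = (u' h, (0 : P)) + ((0 : U), h) := by simp
    simp only [ContinuousLinearMap.comp_apply, ContinuousLinearMap.prod_apply,
      ContinuousLinearMap.coe_id', id_eq]
    rw [this, map_add]
  -- splitting of u' h
  have hsplit : u' h = DH (u' h, 0) + DH (0, h) := by
    conv_lhs => rw [hfix']
    have : ((u' h : U), h) = (u' h, (0 : P)) + ((0 : U), h) := by simp
    simp only [ContinuousLinearMap.comp_apply, ContinuousLinearMap.prod_apply,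
      ContinuousLinearMap.coe_id', id_eq]
    rw [this, map_add]
  -- adjoint equation paired with u' h
  have hC : (inner ℝ ubar (u' h) : ℝ)
      = DJ (u' h, 0) + inner ℝ ubar (DH (u' h, 0)) := by
    conv_lhs => rw [hadj]
    rw [inner_add_left, hgradu, ContinuousLinearMap.adjoint_inner_left, hHu]
    simp
  have hD : (inner ℝ ubar (u' h) : ℝ)
      = inner ℝ ubar (DH (u' h, 0)) + inner ℝ ubar (DH (0, h)) := by
    conv_lhs => rw [hsplit]
    rw [inner_add_right]
  -- RHS
  have hRHS : (inner ℝ (gradient (fun p => J (x₀, p)) ρ₀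
        + (ContinuousLinearMap.adjoint (fderiv ℝ (fun p => H (x₀, p)) ρ₀)) ubar) h : ℝ)
      = DJ (0, h) + inner ℝ ubar (DH (0, h)) := by
    rw [inner_add_left, hgradρ, ContinuousLinearMap.adjoint_inner_left, hHρ]
    simp
  rw [hLHS, hRHS]
  linarith
end

section
/- Let U and P be finite-dimensional real inner product spaces, fix ρ ∈ P, and let H : U × P → U and J : U × P → ℝ be such that v ↦ H(v, ρ) is differentiable, v ↦ ∂_u H(v, ρ) and v ↦ ∇_u J(v, ρ) are continuous, the map v ↦ H(v, ρ) is Lipschitz with constant q < 1, and the operator norm ‖∂_u H(v, ρ)‖ ≤ q for all v ∈ U. Let u* be the unique fixed point of v ↦ H(v, ρ), and let ū* be the unique solution of the adjoint equation ū* = ∇_u J(u*, ρ) + (∂_u H(u*, ρ))* ū*. Then for any starting values u₀ ∈ U and ū₀ ∈ U, the piggyback iterates defined by u_{k+1} = H(u_k, ρ) and ū_{k+1} = ∇_u J(u_k, ρ) + (∂_u H(u_k, ρ))* ū_k satisfy u_k → u* and ū_k → ū* as k → ∞. -/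
private lemma aux_seq (q : ℝ) (hq0 : 0 ≤ q) (hq1 : q < 1) (a d : ℕ → ℝ)
    (ha : ∀ k, 0 ≤ a k)
    (hrec : ∀ k, a (k + 1) ≤ q * a k + d k)
    (hd : Filter.Tendsto d Filter.atTop (nhds 0)) :
    Filter.Tendsto a Filter.atTop (nhds 0) := by
  rw [Metric.tendsto_atTop]
  intro ε hε
  have hq1' : 0 < 1 - q := by linarith
  have hc : 0 < ε * (1 - q) / 2 := by positivity
  rw [Metric.tendsto_atTop] at hd
  obtain ⟨N, hN⟩ := hd _ hc
  have key : ∀ m, a (N + m) ≤ q ^ m * a N + ε / 2 := by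
    intro m
    induction m with
    | zero => simp; positivity
    | succ m ih =>
      have hdN : d (N + m) ≤ ε * (1 - q) / 2 := by
        have := hN (N + m) (Nat.le_add_right _ _)
        rw [Real.dist_eq, sub_zero] at this
        exact le_of_lt (lt_of_le_of_lt (le_abs_self _) this)
      have h2 : a (N + (m + 1)) ≤ q * a (N + m) + d (N + m) := by
        rw [show N + (m + 1) = (N + m) + 1 by ring]; exact hrec _
      calc a (N + (m + 1)) ≤ q * a (N + m) + d (N + m) := h2
        _ ≤ q * (q ^ m * a N + ε / 2) + ε * (1 - q) / 2 := by
            have := mul_le_mul_of_nonneg_left ih hq0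
            linarith
        _ = q ^ (m + 1) * a N + ε / 2 := by ring
  have hgeo : Filter.Tendsto (fun m => q ^ m * a N) Filter.atTop (nhds 0) := by
    simpa using (tendsto_pow_atTop_nhds_zero_of_lt_one hq0 hq1).mul_const (a N)
  rw [Metric.tendsto_atTop] at hgeo
  obtain ⟨M, hM⟩ := hgeo (ε / 2) (by positivity)
  refine ⟨N + M, fun k hk => ?_⟩
  have hkN : N ≤ k := le_trans (Nat.le_add_right _ _) hk
  obtain ⟨m, rfl⟩ := Nat.exists_eq_add_of_le hkN
  have hmM : M ≤ m := by omega
  have h1 : a (N + m) ≤ q ^ m * a N + ε / 2 := key m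
  have h2 : q ^ m * a N < ε / 2 := by
    have := hM m hmM
    rw [Real.dist_eq, sub_zero] at this
    exact lt_of_le_of_lt (le_abs_self _) this
  rw [Real.dist_eq, sub_zero, abs_of_nonneg (ha _)]
  linarith

/-- Convergence of the piggyback iteration: for a fixed design `ρ`, if `v ↦ H(v, ρ)` is
differentiable and a `q`-contraction (`q < 1`), with `‖∂_u H(v, ρ)‖ ≤ q` for all `v`, and
`v ↦ ∂_u H(v, ρ)` and `v ↦ ∇_u J(v, ρ)` are continuous, then the piggyback iterates
`u_{k+1} = H(u_k, ρ)`, `ū_{k+1} = ∇_u J(u_k, ρ) + (∂_u H(u_k, ρ))* ū_k` converge to the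
unique fixed point `u*` and to the unique adjoint solution `ū*`, respectively. -/
theorem piggyback_iteration_converges
    {U P : Type*}
    [NormedAddCommGroup U] [InnerProductSpace ℝ U] [FiniteDimensional ℝ U]
    [NormedAddCommGroup P] [InnerProductSpace ℝ P] [FiniteDimensional ℝ P]
    (H : U × P → U) (J : U × P → ℝ) (ρ : P) (q : ℝ) (hq : q < 1)
    (hdiff : Differentiable ℝ (fun v => H (v, ρ)))
    (hcontA : Continuous (fun v => fderiv ℝ (fun w => H (w, ρ)) v))
    (hcontg : Continuous (fun v => gradient (fun w => J (w, ρ)) v))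
    (hlip : ∀ v w : U, ‖H (v, ρ) - H (w, ρ)‖ ≤ q * ‖v - w‖)
    (hop : ∀ v : U, ‖fderiv ℝ (fun w => H (w, ρ)) v‖ ≤ q)
    (ustar : U) (hustar : ustar = H (ustar, ρ))
    (ubarstar : U)
    (hubarstar : ubarstar = gradient (fun w => J (w, ρ)) ustar
        + (ContinuousLinearMap.adjoint (fderiv ℝ (fun w => H (w, ρ)) ustar)) ubarstar)
    (u ubar : ℕ → U)
    (hurec : ∀ k : ℕ, u (k + 1) = H (u k, ρ))
    (hubrec : ∀ k : ℕ, ubar (k + 1) = gradient (fun w => J (w, ρ)) (u k)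
        + (ContinuousLinearMap.adjoint (fderiv ℝ (fun w => H (w, ρ)) (u k))) (ubar k)) :
    Filter.Tendsto u Filter.atTop (nhds ustar) ∧
      Filter.Tendsto ubar Filter.atTop (nhds ubarstar) := by
  set A : U → (U →L[ℝ] U) := fun v => fderiv ℝ (fun w => H (w, ρ)) v with hA
  set g : U → U := fun v => gradient (fun w => J (w, ρ)) v with hg
  have hq0 : 0 ≤ q := le_trans (norm_nonneg (A ustar)) (hop ustar)
  -- convergence of u
  have hu : Filter.Tendsto u Filter.atTop (nhds ustar) := by
    rw [tendsto_iff_norm_sub_tendsto_zero]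
    apply aux_seq q hq0 hq (fun k => ‖u k - ustar‖) (fun _ => 0)
      (fun k => norm_nonneg _)
    · intro k
      rw [add_zero, hurec k]
      calc ‖H (u k, ρ) - ustar‖ = ‖H (u k, ρ) - H (ustar, ρ)‖ := by rw [← hustar]
        _ ≤ q * ‖u k - ustar‖ := hlip _ _
    · exact tendsto_const_nhds
  refine ⟨hu, ?_⟩
  -- the perturbation term
  set φ : U → U := fun v => g v - g ustar
      + ((ContinuousLinearMap.adjoint (A v)) ubarstar
        - (ContinuousLinearMap.adjoint (A ustar)) ubarstar) with hφdef
  have hcontAdj : Continuous (fun v => (ContinuousLinearMap.adjoint (A v) : U →L[ℝ] U)) :=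
    (ContinuousLinearMap.adjoint : (U →L[ℝ] U) ≃ₗᵢ⋆[ℝ] (U →L[ℝ] U)).continuous.comp hcontA
  have hφcont : Continuous φ := by
    apply Continuous.add
    · exact hcontg.sub continuous_const
    · exact (hcontAdj.clm_apply continuous_const).sub continuous_const
  have hφ0 : φ ustar = 0 := by simp [hφdef]
  have hd : Filter.Tendsto (fun k => ‖φ (u k)‖) Filter.atTop (nhds 0) := by
    have h1 : Filter.Tendsto (fun k => φ (u k)) Filter.atTop (nhds (φ ustar)) :=
      (hφcont.tendsto ustar).comp hu
    rw [hφ0] at h1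
    simpa using h1.norm
  rw [tendsto_iff_norm_sub_tendsto_zero]
  apply aux_seq q hq0 hq (fun k => ‖ubar k - ubarstar‖) (fun k => ‖φ (u k)‖)
    (fun k => norm_nonneg _) _ hd
  intro k
  have hsplit : ubar (k + 1) - ubarstar
      = φ (u k) + (ContinuousLinearMap.adjoint (A (u k))) (ubar k - ubarstar) := by
    rw [hubrec k]
    nth_rewrite 1 [hubarstar]
    simp only [hφdef, map_sub]
    abel
  show ‖ubar (k + 1) - ubarstar‖ ≤ q * ‖ubar k - ubarstar‖ + ‖φ (u k)‖
  rw [hsplit]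
  calc ‖φ (u k) + (ContinuousLinearMap.adjoint (A (u k))) (ubar k - ubarstar)‖
      ≤ ‖φ (u k)‖ + ‖(ContinuousLinearMap.adjoint (A (u k))) (ubar k - ubarstar)‖ :=
        norm_add_le _ _
    _ ≤ ‖φ (u k)‖ + q * ‖ubar k - ubarstar‖ := by
        gcongr
        calc ‖(ContinuousLinearMap.adjoint (A (u k))) (ubar k - ubarstar)‖
            ≤ ‖ContinuousLinearMap.adjoint (A (u k))‖ * ‖ubar k - ubarstar‖ :=
              ContinuousLinearMap.le_opNorm _ _
          _ ≤ q * ‖ubar k - ubarstar‖ := by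
              gcongr
              rw [LinearIsometryEquiv.norm_map]
              exact hop _
    _ = q * ‖ubar k - ubarstar‖ + ‖φ (u k)‖ := by ring
end

section
/- Let E be a finite-dimensional real inner product space, L a positive natural number, and h₁, …, h_L : E → E maps. Given x ∈ E, define the forward sweep v₀ = x and v_{l+1} = h_{l+1}(v_l) for l = 0, …, L−1, and assume each h_{l+1} is Fréchet differentiable at v_l. Given z̄ ∈ E, define the reverse sweep v̄_L = z̄ and v̄_l = (Dh_{l+1}(v_l))* v̄_{l+1} for l = L−1, …, 0, where Dh_{l+1}(v_l) is the Fréchet derivative and * denotes the adjoint. Then the composition F = h_L ∘ h_{L−1} ∘ ⋯ ∘ h₁ is Fréchet differentiable at x and v̄₀ = (DF(x))* z̄; that is, the reverse sweep computes the transposed-Jacobian–vector product of the composed map. -/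
/-- The composition `h_L ∘ h_{L−1} ∘ ⋯ ∘ h₁` of the elemental operations
(indices `0, …, L−1` correspond to `h₁, …, h_L`). -/
def compElem {E : Type*} : (L : ℕ) → (Fin L → E → E) → (E → E)
  | 0, _ => id
  | (L + 1), h => h (Fin.last L) ∘ compElem L (fun i => h i.castSucc)

theorem compElem_forward {E : Type*} :
    ∀ (L : ℕ) (h : Fin L → E → E) (v : Fin (L + 1) → E),
      (∀ l : Fin L, v l.succ = h l (v l.castSucc)) →
      compElem L h (v 0) = v (Fin.last L)
  | 0, _, _, _ => rfl
  | (L + 1), h, v, hv => by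
    have ih := compElem_forward L (fun i => h i.castSucc) (fun i => v i.castSucc)
      (fun l => by have := hv l.castSucc; rw [Fin.succ_castSucc] at this; exact this)
    simp only [Fin.castSucc_zero] at ih
    simp only [compElem, Function.comp_apply, ih]
    rw [← hv (Fin.last L), Fin.succ_last]

theorem reverse_mode_aux {E : Type*} [NormedAddCommGroup E] [InnerProductSpace ℝ E]
    [FiniteDimensional ℝ E] :
    ∀ (L : ℕ) (h : Fin L → E → E) (v : Fin (L + 1) → E),
      (∀ l : Fin L, v l.succ = h l (v l.castSucc)) →
      (∀ l : Fin L, DifferentiableAt ℝ (h l) (v l.castSucc)) →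
      ∀ (vbar : Fin (L + 1) → E),
      (∀ l : Fin L, vbar l.castSucc
          = (ContinuousLinearMap.adjoint (fderiv ℝ (h l) (v l.castSucc))) (vbar l.succ)) →
      DifferentiableAt ℝ (compElem L h) (v 0) ∧
        vbar 0 = (ContinuousLinearMap.adjoint (fderiv ℝ (compElem L h) (v 0)))
          (vbar (Fin.last L))
  | 0, _, _, _, _, _, _ => by
    refine ⟨differentiableAt_id, ?_⟩
    rw [show compElem 0 _ = (id : E → E) from rfl, fderiv_id, ContinuousLinearMap.adjoint_id]
    rfl
  | (L + 1), h, v, hv, hdiff, vbar, hvb => by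
    have ih := reverse_mode_aux L (fun i => h i.castSucc) (fun i => v i.castSucc)
      (fun l => by have := hv l.castSucc; rw [Fin.succ_castSucc] at this; exact this)
      (fun l => hdiff l.castSucc)
      (fun i => vbar i.castSucc)
      (fun l => by have := hvb l.castSucc; rw [Fin.succ_castSucc] at this; exact this)
    simp only [Fin.castSucc_zero] at ih
    obtain ⟨ihd, ihe⟩ := ih
    have hfwd : compElem L (fun i => h i.castSucc) (v 0) = v (Fin.last L).castSucc := by
      have := compElem_forward L (fun i => h i.castSucc) (fun i => v i.castSucc)
        (fun l => by have := hv l.castSucc; rw [Fin.succ_castSucc] at this; exact this)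
      simpa using this
    have hdlast : DifferentiableAt ℝ (h (Fin.last L))
        (compElem L (fun i => h i.castSucc) (v 0)) := by
      rw [hfwd]; exact hdiff (Fin.last L)
    have hdcomp : DifferentiableAt ℝ (compElem (L + 1) h) (v 0) := by
      show DifferentiableAt ℝ (h (Fin.last L) ∘ compElem L (fun i => h i.castSucc)) (v 0)
      exact hdlast.comp _ ihd
    refine ⟨hdcomp, ?_⟩
    have hfd : fderiv ℝ (compElem (L + 1) h) (v 0)
        = (fderiv ℝ (h (Fin.last L)) (v (Fin.last L).castSucc)).comp
          (fderiv ℝ (compElem L (fun i => h i.castSucc)) (v 0)) := by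
      show fderiv ℝ (h (Fin.last L) ∘ compElem L (fun i => h i.castSucc)) (v 0) = _
      rw [fderiv_comp _ hdlast ihd, hfwd]
    rw [hfd, ContinuousLinearMap.adjoint_comp, ContinuousLinearMap.comp_apply,
      ← Fin.succ_last, ← hvb (Fin.last L)]
    exact ihe

/-- Reverse mode of automatic differentiation: given the forward sweep
`v₀ = x`, `v_{l+1} = h_{l+1}(v_l)` through elemental operations differentiable at the
visited points, the reverse sweep `v̄_L = z̄`, `v̄_l = (Dh_{l+1}(v_l))* v̄_{l+1}` computes
`v̄₀ = (DF(x))* z̄` for the composed map `F = h_L ∘ ⋯ ∘ h₁`, which is differentiable at `x`. -/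
theorem reverse_mode_AD_transposed_jacobian_product
    {E : Type*} [NormedAddCommGroup E] [InnerProductSpace ℝ E] [FiniteDimensional ℝ E]
    (L : ℕ) (hL : 0 < L) (h : Fin L → E → E) (x : E)
    (v : Fin (L + 1) → E) (hv0 : v 0 = x)
    (hv : ∀ l : Fin L, v l.succ = h l (v l.castSucc))
    (hdiff : ∀ l : Fin L, DifferentiableAt ℝ (h l) (v l.castSucc))
    (zbar : E) (vbar : Fin (L + 1) → E) (hvbL : vbar (Fin.last L) = zbar)
    (hvb : ∀ l : Fin L, vbar l.castSucc
        = (ContinuousLinearMap.adjoint (fderiv ℝ (h l) (v l.castSucc))) (vbar l.succ)) :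
    DifferentiableAt ℝ (compElem L h) x ∧
      vbar 0 = (ContinuousLinearMap.adjoint (fderiv ℝ (compElem L h) x)) zbar := by
  subst hv0 hvbL
  exact reverse_mode_aux L h v hv hdiff vbar hvb
end

section
/- Let U and P be finite-dimensional real inner product spaces, N a positive natural number, Φ¹, …, Φᴺ : U × P → U continuously differentiable one-step time propagators, f : U × P → ℝ a continuously differentiable instantaneous quantity, w₀, …, w_N real weights, and g⁰ ∈ U a fixed initial condition. For ρ ∈ P define the forward trajectory u⁰(ρ) = g⁰ and uⁱ(ρ) = Φⁱ(u^{i−1}(ρ), ρ) for i = 1, …, N, and the objective J(ρ) = Σ_{i=0}^{N} w_i f(uⁱ(ρ), ρ). Fix ρ and define the backward adjoint sweep ūᴺ = w_N ∇_u f(uᴺ, ρ) and, for i = N−1 down to 0, ūⁱ = w_i ∇_u f(uⁱ, ρ) + (∂_u Φ^{i+1}(uⁱ, ρ))* ū^{i+1}, together with ρ̄ = Σ_{i=0}^{N} w_i ∇_ρ f(uⁱ, ρ) + Σ_{i=1}^{N} (∂_ρ Φⁱ(u^{i−1}, ρ))* ūⁱ. Then J is differentiable at ρ and its gradient equals ρ̄.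 -/
open Finset ContinuousLinearMap

/-- The forward trajectory of a one-step time marching scheme:
`u⁰ = g⁰` and `uⁱ = Φⁱ(u^{i−1}, ρ)` for `i ≥ 1`. -/
def forwardTraj {U P : Type*} (Φ : ℕ → U × P → U) (g0 : U) (ρ : P) : ℕ → U
  | 0 => g0
  | (i + 1) => Φ (i + 1) (forwardTraj Φ g0 ρ i, ρ)

local notation "⟪" x ", " y "⟫" => @inner ℝ _ _ x y

private lemma inner_gradient_eq' {F : Type*} [NormedAddCommGroup F] [InnerProductSpace ℝ F]
    [CompleteSpace F] (f : F → ℝ) (x v : F) : ⟪gradient f x, v⟫ = fderiv ℝ f x v := by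
  rw [gradient, InnerProductSpace.toDual_symm_apply]

/-- Discrete adjoint time marching: for the objective
`J(ρ) = Σ_{i=0}^{N} w_i f(uⁱ(ρ), ρ)` along the forward trajectory `uⁱ(ρ)` of the `C¹`
propagators `Φⁱ`, the backward adjoint sweep `ūᴺ = w_N ∇_u f(uᴺ, ρ)`,
`ūⁱ = w_i ∇_u f(uⁱ, ρ) + (∂_u Φ^{i+1}(uⁱ, ρ))* ū^{i+1}` together with
`ρ̄ = Σ_{i=0}^{N} w_i ∇_ρ f(uⁱ, ρ) + Σ_{i=1}^{N} (∂_ρ Φⁱ(u^{i−1}, ρ))* ūⁱ`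
computes the gradient of `J` at `ρ`, and `J` is differentiable at `ρ`. -/
theorem discrete_adjoint_time_stepping_gradient
    {U P : Type*}
    [NormedAddCommGroup U] [InnerProductSpace ℝ U] [FiniteDimensional ℝ U]
    [NormedAddCommGroup P] [InnerProductSpace ℝ P] [FiniteDimensional ℝ P]
    (N : ℕ) (hN : 0 < N)
    (Φ : ℕ → U × P → U) (hΦ : ∀ i : ℕ, 1 ≤ i → i ≤ N → ContDiff ℝ 1 (Φ i))
    (f : U × P → ℝ) (hf : ContDiff ℝ 1 f)
    (w : ℕ → ℝ) (g0 : U) (ρ : P)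
    (ubar : ℕ → U)
    (hubarN : ubar N = w N • gradient (fun v => f (v, ρ)) (forwardTraj Φ g0 ρ N))
    (hubar : ∀ i : ℕ, i < N → ubar i
        = w i • gradient (fun v => f (v, ρ)) (forwardTraj Φ g0 ρ i)
          + (ContinuousLinearMap.adjoint
              (fderiv ℝ (fun v => Φ (i + 1) (v, ρ)) (forwardTraj Φ g0 ρ i))) (ubar (i + 1)))
    (rbar : P)
    (hrbar : rbar
        = (∑ i ∈ Finset.range (N + 1),
            w i • gradient (fun p => f (forwardTraj Φ g0 ρ i, p)) ρ)
          + ∑ i ∈ Finset.range N,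
            (ContinuousLinearMap.adjoint
              (fderiv ℝ (fun p => Φ (i + 1) (forwardTraj Φ g0 ρ i, p)) ρ)) (ubar (i + 1))) :
    DifferentiableAt ℝ
        (fun ρ' => ∑ i ∈ Finset.range (N + 1), w i * f (forwardTraj Φ g0 ρ' i, ρ')) ρ ∧
      gradient
        (fun ρ' => ∑ i ∈ Finset.range (N + 1), w i * f (forwardTraj Φ g0 ρ' i, ρ')) ρ
        = rbar := by
  have hfd : Differentiable ℝ f := hf.differentiable one_ne_zero
  -- differentiability of the trajectory in the design parameter
  have hdiff : ∀ i, i ≤ N → Differentiable ℝ (fun ρ' => forwardTraj Φ g0 ρ' i) := by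
    intro i
    induction i with
    | zero => exact fun _ => by simpa [forwardTraj] using differentiable_const (c := g0) (E := P)
    | succ i ih =>
      intro hi
      have h2 : Differentiable ℝ (Φ (i+1)) := (hΦ (i+1) (by omega) hi).differentiable one_ne_zero
      have h3 := h2.comp ((ih (by omega)).prodMk differentiable_id)
      simpa [forwardTraj, Function.comp_def] using h3
  set u : ℕ → U := forwardTraj Φ g0 ρ with hu
  set D : ℕ → P →L[ℝ] U := fun i => fderiv ℝ (fun ρ' => forwardTraj Φ g0 ρ' i) ρ with hDdef
  set A : ℕ → U →L[ℝ] U := fun i => fderiv ℝ (fun v => Φ (i+1) (v, ρ)) (u i) with hAdef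
  set B : ℕ → P →L[ℝ] U := fun i => fderiv ℝ (fun p => Φ (i+1) (u i, p)) ρ with hBdef
  set gu : ℕ → U := fun i => gradient (fun v => f (v, ρ)) (u i) with hgudef
  set gp : ℕ → P := fun i => gradient (fun p => f (u i, p)) ρ with hgpdef
  have hLd : ∀ i, i < N → HasFDerivAt (Φ (i+1)) (fderiv ℝ (Φ (i+1)) (u i, ρ)) (u i, ρ) :=
    fun i hi => (((hΦ (i+1) (by omega) (by omega)).differentiable one_ne_zero) _).hasFDerivAt
  have hAeq : ∀ i, i < N → A i = (fderiv ℝ (Φ (i+1)) (u i, ρ)).comp (inl ℝ U P) := by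
    intro i hi
    have h2 : HasFDerivAt (fun v => Φ (i+1) (v, ρ))
        ((fderiv ℝ (Φ (i+1)) (u i, ρ)).comp (inl ℝ U P)) (u i) :=
      (hLd i hi).comp (u i) (hasFDerivAt_prodMk_left (u i) ρ)
    exact h2.fderiv
  have hBeq : ∀ i, i < N → B i = (fderiv ℝ (Φ (i+1)) (u i, ρ)).comp (inr ℝ U P) := by
    intro i hi
    have h2 : HasFDerivAt (fun p => Φ (i+1) (u i, p))
        ((fderiv ℝ (Φ (i+1)) (u i, ρ)).comp (inr ℝ U P)) ρ :=
      (hLd i hi).comp ρ (hasFDerivAt_prodMk_right (u i) ρ)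
    exact h2.fderiv
  have hDrec : ∀ i, i < N → D (i+1)
      = (fderiv ℝ (Φ (i+1)) (u i, ρ)).comp ((D i).prod (ContinuousLinearMap.id ℝ P)) := by
    intro i hi
    have h1 : HasFDerivAt (fun ρ' => (forwardTraj Φ g0 ρ' i, ρ'))
        ((D i).prod (ContinuousLinearMap.id ℝ P)) ρ :=
      (((hdiff i (by omega)) ρ).hasFDerivAt).prodMk (hasFDerivAt_id ρ)
    have h2' := HasFDerivAt.comp (f := fun ρ' => (forwardTraj Φ g0 ρ' i, ρ')) ρ (hLd i hi) h1
    have h2 : HasFDerivAt (fun ρ' => Φ (i+1) (forwardTraj Φ g0 ρ' i, ρ'))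
        ((fderiv ℝ (Φ (i+1)) (u i, ρ)).comp ((D i).prod (ContinuousLinearMap.id ℝ P))) ρ := h2'
    have h3 : (fun ρ' => forwardTraj Φ g0 ρ' (i+1))
        = fun ρ' => Φ (i+1) (forwardTraj Φ g0 ρ' i, ρ') := by
      funext ρ'; simp [forwardTraj]
    have h4 : D (i+1) = fderiv ℝ (fun ρ' => forwardTraj Φ g0 ρ' (i+1)) ρ := rfl
    rw [h4, h3]
    exact h2.fderiv
  have hD0 : D 0 = 0 := by
    have h3 : (fun ρ' => forwardTraj Φ g0 ρ' 0) = fun _ : P => g0 := by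
      funext ρ'; simp [forwardTraj]
    have h4 : D 0 = fderiv ℝ (fun ρ' => forwardTraj Φ g0 ρ' 0) ρ := rfl
    rw [h4, h3]
    exact fderiv_const_apply g0
  -- partial gradients of f versus its full Fréchet derivative
  have hguLf : ∀ i (x : U), ⟪gu i, x⟫ = fderiv ℝ f (u i, ρ) (x, 0) := by
    intro i x
    have h2 : HasFDerivAt (fun v => f (v, ρ))
        ((fderiv ℝ f (u i, ρ)).comp (inl ℝ U P)) (u i) :=
      (hfd _).hasFDerivAt.comp (u i) (hasFDerivAt_prodMk_left (u i) ρ)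
    have : gu i = gradient (fun v => f (v, ρ)) (u i) := rfl
    rw [this, inner_gradient_eq', h2.fderiv]
    simp
  have hgpLf : ∀ i (h : P), ⟪gp i, h⟫ = fderiv ℝ f (u i, ρ) (0, h) := by
    intro i h
    have h2 : HasFDerivAt (fun p => f (u i, p))
        ((fderiv ℝ f (u i, ρ)).comp (inr ℝ U P)) ρ :=
      (hfd _).hasFDerivAt.comp ρ (hasFDerivAt_prodMk_right (u i) ρ)
    have : gp i = gradient (fun p => f (u i, p)) ρ := rfl
    rw [this, inner_gradient_eq', h2.fderiv]
    simp
  have hLfsplit : ∀ i (x : U) (h : P),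
      fderiv ℝ f (u i, ρ) (x, h) = ⟪gu i, x⟫ + ⟪gp i, h⟫ := by
    intro i x h
    rw [hguLf, hgpLf, ← map_add]
    norm_num
  -- derivative of the objective
  set J' : P →L[ℝ] ℝ := ∑ i ∈ range (N+1),
      w i • ((fderiv ℝ f (u i, ρ)).comp ((D i).prod (ContinuousLinearMap.id ℝ P))) with hJ'def
  have hJ : HasFDerivAt
      (fun ρ' => ∑ i ∈ range (N + 1), w i * f (forwardTraj Φ g0 ρ' i, ρ')) J' ρ := by
    apply HasFDerivAt.fun_sum
    intro i hi
    have hiN : i ≤ N := by have := mem_range.mp hi; omega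
    have h1 : HasFDerivAt (fun ρ' => (forwardTraj Φ g0 ρ' i, ρ'))
        ((D i).prod (ContinuousLinearMap.id ℝ P)) ρ :=
      (((hdiff i hiN) ρ).hasFDerivAt).prodMk (hasFDerivAt_id ρ)
    have h2 : HasFDerivAt (fun ρ' => f (forwardTraj Φ g0 ρ' i, ρ'))
        ((fderiv ℝ f (u i, ρ)).comp ((D i).prod (ContinuousLinearMap.id ℝ P))) ρ :=
      ((hfd _).hasFDerivAt).comp ρ h1
    exact h2.const_mul (w i)
  refine ⟨hJ.differentiableAt, ?_⟩
  -- step relation pointwise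
  have hDstep : ∀ i, i < N → ∀ h : P, D (i+1) h = A i (D i h) + B i h := by
    intro i hi h
    have e : ((D i) h, h) = ((D i) h, (0:P)) + ((0:U), h) := by simp
    rw [hDrec i hi, hAeq i hi, hBeq i hi]
    simp only [ContinuousLinearMap.comp_apply, ContinuousLinearMap.prod_apply,
      ContinuousLinearMap.coe_id', id_eq, inl_apply, inr_apply]
    rw [e, map_add]
  -- the telescoping invariant of the adjoint sweep
  have claim : ∀ n, n ≤ N → ∀ h : P,
      (∑ i ∈ range n, w i * ⟪gu i, D i h⟫) + ⟪ubar n, D n h⟫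
        = ∑ i ∈ range n, ⟪ubar (i+1), B i h⟫ := by
    intro n
    induction n with
    | zero => intro _ h; simp [hD0]
    | succ n ih =>
      intro hn h
      have hnN : n < N := hn
      rw [Finset.sum_range_succ, Finset.sum_range_succ]
      have hadj : ⟪ubar (n+1), A n (D n h)⟫
          = ⟪(ContinuousLinearMap.adjoint (A n)) (ubar (n+1)), D n h⟫ :=
        (ContinuousLinearMap.adjoint_inner_left (A n) ((D n) h) (ubar (n+1))).symm
      have e1 : w n * ⟪gu n, D n h⟫
          + ⟪(ContinuousLinearMap.adjoint (A n)) (ubar (n+1)), D n h⟫ = ⟪ubar n, D n h⟫ := by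
        rw [hubar n hnN, inner_add_left, real_inner_smul_left]
      rw [hDstep n hnN h, inner_add_right, hadj]
      have := ih (le_of_lt hnN) h
      linarith
  have main : ∀ h : P, ∑ i ∈ range (N+1), w i * ⟪gu i, D i h⟫
      = ∑ i ∈ range N, ⟪ubar (i+1), B i h⟫ := by
    intro h
    have hc := claim N le_rfl h
    rw [hubarN, real_inner_smul_left] at hc
    rw [Finset.sum_range_succ]
    linarith
  -- conclude: inner products with an arbitrary direction agree
  apply ext_inner_right ℝ
  intro h
  rw [inner_gradient_eq', hJ.fderiv]
  have hJ'h : J' h = ∑ i ∈ range (N+1), w i * (⟪gu i, D i h⟫ + ⟪gp i, h⟫) := by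
    rw [hJ'def]
    rw [ContinuousLinearMap.sum_apply]
    refine Finset.sum_congr rfl fun i _ => ?_
    simp only [ContinuousLinearMap.smul_apply, ContinuousLinearMap.comp_apply,
      ContinuousLinearMap.prod_apply, ContinuousLinearMap.coe_id', id_eq, smul_eq_mul]
    rw [hLfsplit]
  rw [hJ'h]
  have expand : ∑ i ∈ range (N+1), w i * (⟪gu i, D i h⟫ + ⟪gp i, h⟫)
      = (∑ i ∈ range (N+1), w i * ⟪gu i, D i h⟫)
        + ∑ i ∈ range (N+1), w i * ⟪gp i, h⟫ := by
    rw [← Finset.sum_add_distrib]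
    exact Finset.sum_congr rfl fun i _ => by ring
  rw [expand, main h, hrbar, inner_add_left, sum_inner, sum_inner]
  have e2 : ∑ i ∈ range (N+1), w i * ⟪gp i, h⟫
      = ∑ i ∈ range (N+1), ⟪w i • gp i, h⟫ :=
    Finset.sum_congr rfl fun i _ => (real_inner_smul_left (gp i) h (w i)).symm
  have e3 : ∑ i ∈ range N, ⟪ubar (i+1), B i h⟫
      = ∑ i ∈ range N, ⟪(ContinuousLinearMap.adjoint (B i)) (ubar (i+1)), h⟫ :=
    Finset.sum_congr rfl fun i _ =>
      (ContinuousLinearMap.adjoint_inner_left (B i) h (ubar (i+1))).symm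
  rw [e2, e3, add_comm]
end
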